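/- The nonlinear recurrence x_{n+3} x_n = x_{n+2} x_{n+1} + a(x_{n+1} + x_{n+2}) has the Laurent property: treating x_0, x_1, x_2 as indeterminates, every forward iterate x_n (n ≥ 3) lies in the Laurent polynomial ring ℤ[a][x_0^{±1}, x_1^{±1}, x_2^{±1}]. -/
import Mathlib

open MvPolynomial

/-- `E = x₀ x₁ x₂` (the product of the three initial variables). -/
noncomputable def hhE : MvPolynomial (Fin 4) ℤ := X 1 * X 2 * X 3

/-- Numerator of the conserved quantity `K = hhk / hhE` of the recurrence. -/
noncomputable def hhk : MvPolynomial (Fin 4) ℤ :=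
  X 2 * X 3 ^ 2 + X 1 * X 2 * X 3 + X 1 ^ 2 * X 2
    + X 0 * (X 3 ^ 2 + 2 * X 2 * X 3 + 2 * X 1 * X 3 + 2 * X 1 * X 2 + X 1 ^ 2)
    + X 0 ^ 2 * (X 1 + X 2 + X 3)

noncomputable def hhN3 : MvPolynomial (Fin 4) ℤ := X 3 * X 2 + X 0 * (X 2 + X 3)
noncomputable def hhN4 : MvPolynomial (Fin 4) ℤ := hhN3 * (X 3 + X 0) + X 0 * X 1 * X 3
noncomputable def hhN5 : MvPolynomial (Fin 4) ℤ :=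
  hhN4 * hhN3 + X 0 * hhN3 * X 1 * X 2 + X 0 * hhN4 * X 1

/-- Numerator polynomials: `x n = hhP n / hhE ^ n`. -/
noncomputable def hhP : ℕ → MvPolynomial (Fin 4) ℤ
  | 0 => X 1
  | 1 => X 2 * hhE
  | 2 => X 3 * hhE ^ 2
  | 3 => hhN3 * (X 2 * X 3) * hhE ^ 2
  | 4 => hhN4 * X 3 * hhE ^ 3
  | 5 => hhN5 * (X 2 * X 3) * hhE ^ 3
  | (n + 6) => hhk * (hhP (n + 4) * hhE - hhP (n + 2) * hhE ^ 3) + hhP n * hhE ^ 6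

/-- Integer shadow of `hhP` under evaluating all variables at `1`. -/
def hhq : ℕ → ℤ
  | 0 => 1
  | 1 => 1
  | 2 => 1
  | 3 => 3
  | 4 => 7
  | 5 => 31
  | (n + 6) => 14 * (hhq (n + 4) - hhq (n + 2)) + hhq n

theorem hhq_eval : ∀ n, eval (fun _ => (1:ℤ)) (hhP n) = hhq n := by
  intro n
  induction n using hhP.induct with
  | case1 => simp [hhP, hhq]
  | case2 => simp [hhP, hhq, hhE]
  | case3 => simp [hhP, hhq, hhE]
  | case4 => simp [hhP, hhq, hhE, hhN3]
  | case5 => simp [hhP, hhq, hhE, hhN3, hhN4]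
  | case6 => simp [hhP, hhq, hhE, hhN3, hhN4, hhN5]
  | case7 n ih4 ih2 ih0 =>
      simp only [hhP, hhq, map_add, map_mul, map_sub, map_pow, ih4, ih2, ih0]
      simp [hhk, hhE]

theorem hhq_aux : ∀ n, (0 < hhq n ∧ 0 < hhq (n+1) ∧ 0 < hhq (n+2) ∧ 0 < hhq (n+3))
    ∧ 2 * hhq (n+2) ≤ hhq (n+4) ∧ 2 * hhq (n+3) ≤ hhq (n+5) := by
  intro n
  induction n with
  | zero => norm_num [hhq]
  | succ n ih =>
      obtain ⟨⟨p0, p1, p2, p3⟩, g4, g5⟩ := ih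
      have e6 : hhq (n+6) = 14 * (hhq (n + 4) - hhq (n + 2)) + hhq n := rfl
      have hn2 : n + 1 + 2 = n + 3 := by omega
      have hn3 : n + 1 + 3 = n + 4 := by omega
      have hn4 : n + 1 + 4 = n + 5 := by omega
      have hn5 : n + 1 + 5 = n + 6 := by omega
      have hn1 : n + 1 + 1 = n + 2 := by omega
      rw [hn1, hn2, hn3, hn4, hn5]
      refine ⟨⟨p1, p2, p3, by linarith⟩, g5, by rw [e6]; linarith⟩

theorem hhq_pos (n : ℕ) : 0 < hhq n := (hhq_aux n).1.1

theorem hhP_ne (n : ℕ) : hhP n ≠ 0 := by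
  intro h
  have h1 := hhq_eval n
  rw [h] at h1
  simp at h1
  have := hhq_pos n
  omega

set_option synthInstance.maxHeartbeats 1000000 in
set_option maxHeartbeats 4000000 in
theorem heiho_laurent_property_k1
    (x : ℕ → FractionRing (MvPolynomial (Fin 4) ℤ))
    (h0 : x 0 = algebraMap (MvPolynomial (Fin 4) ℤ) _ (X 1))
    (h1 : x 1 = algebraMap (MvPolynomial (Fin 4) ℤ) _ (X 2))
    (h2 : x 2 = algebraMap (MvPolynomial (Fin 4) ℤ) _ (X 3))
    (hrec : ∀ n, x (n + 3) =
      (x (n + 2) * x (n + 1)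
        + algebraMap (MvPolynomial (Fin 4) ℤ) _ (X 0) * (x (n + 1) + x (n + 2))) / x n) :
    ∀ n, ∃ (p : MvPolynomial (Fin 4) ℤ) (i j l : ℕ),
      x n * algebraMap (MvPolynomial (Fin 4) ℤ) _ (X 1 ^ i * X 2 ^ j * X 3 ^ l) =
        algebraMap (MvPolynomial (Fin 4) ℤ) _ p := by
  set φ := algebraMap (MvPolynomial (Fin 4) ℤ) (FractionRing (MvPolynomial (Fin 4) ℤ)) with hphi
  have hzero : ∀ p : MvPolynomial (Fin 4) ℤ, φ p = 0 ↔ p = 0 := fun p =>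
    IsFractionRing.to_map_eq_zero_iff
  have hPne : ∀ n, φ (hhP n) ≠ 0 := fun n h => hhP_ne n ((hzero _).1 h)
  have hX1 : φ (X 1) ≠ 0 := fun h => X_ne_zero 1 ((hzero _).1 h)
  have hX2 : φ (X 2) ≠ 0 := fun h => X_ne_zero 2 ((hzero _).1 h)
  have hX3 : φ (X 3) ≠ 0 := fun h => X_ne_zero 3 ((hzero _).1 h)
  have hEne : φ hhE ≠ 0 := by
    rw [Ne, hzero, hhE]
    exact mul_ne_zero (mul_ne_zero (X_ne_zero 1) (X_ne_zero 2)) (X_ne_zero 3)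
  have hnz : ∀ m, x m * φ hhE ^ m = φ (hhP m) → x m ≠ 0 := by
    intro m hm h
    exact hPne m (by rw [← hm, h, zero_mul])
  -- product forms of the first three steps of the recurrence
  have m3x : x 3 * φ (X 1) = (φ (X 3) * φ (X 2) + φ (X 0) * (φ (X 2) + φ (X 3))) := by
    have h := hrec 0
    norm_num at h
    rw [h0, h1, h2] at h
    rw [h, div_mul_cancel₀ _ hX1]
  have m4x' : x 4 * φ (X 2) = x 3 * φ (X 3) + φ (X 0) * (φ (X 3) + x 3) := by
    have h := hrec 1
    norm_num at h
    rw [h1, h2] at h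
    rw [h, div_mul_cancel₀ _ hX2]
  have m4x : x 4 * (φ (X 1) * φ (X 2)) = ((φ (X 3) * φ (X 2) + φ (X 0) * (φ (X 2) + φ (X 3))) * (φ (X 3) + φ (X 0)) + φ (X 0) * φ (X 1) * φ (X 3)) := by
    linear_combination φ (X 1) * m4x' + (φ (X 3) + φ (X 0)) * m3x
  have m5x' : x 5 * φ (X 3) = x 4 * x 3 + φ (X 0) * (x 3 + x 4) := by
    have h := hrec 2
    norm_num at h
    rw [h2] at h
    rw [h, div_mul_cancel₀ _ hX3]
  have m5x : x 5 * (φ (X 1) ^ 2 * φ (X 2) * φ (X 3)) =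
      ((φ (X 3) * φ (X 2) + φ (X 0) * (φ (X 2) + φ (X 3))) * (φ (X 3) + φ (X 0)) + φ (X 0) * φ (X 1) * φ (X 3)) * (φ (X 3) * φ (X 2) + φ (X 0) * (φ (X 2) + φ (X 3)))
        + φ (X 0) * (φ (X 3) * φ (X 2) + φ (X 0) * (φ (X 2) + φ (X 3))) * φ (X 1) * φ (X 2)
        + φ (X 0) * ((φ (X 3) * φ (X 2) + φ (X 0) * (φ (X 2) + φ (X 3))) * (φ (X 3) + φ (X 0)) + φ (X 0) * φ (X 1) * φ (X 3)) * φ (X 1) := by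
    linear_combination (φ (X 1) ^ 2 * φ (X 2)) * m5x' + (x 3 * φ (X 1) + φ (X 0) * φ (X 1)) * m4x
      + (((φ (X 3) * φ (X 2) + φ (X 0) * (φ (X 2) + φ (X 3))) * (φ (X 3) + φ (X 0)) + φ (X 0) * φ (X 1) * φ (X 3)) + φ (X 0) * φ (X 1) * φ (X 2)) * m3x
  -- base cases of the Laurent representation
  have s0 : x 0 * φ hhE ^ 0 = φ (hhP 0) := by simp only [hhP, pow_zero, mul_one, h0]
  have s1 : x 1 * φ hhE ^ 1 = φ (hhP 1) := by simp only [hhP, pow_one, h1, map_mul]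
  have s2 : x 2 * φ hhE ^ 2 = φ (hhP 2) := by simp only [hhP, h2, map_mul, map_pow]
  have s3 : x 3 * φ hhE ^ 3 = φ (hhP 3) := by
    show _ = φ (hhN3 * (X 2 * X 3) * hhE ^ 2)
    simp only [hhN3, hhE, map_mul, map_add, map_pow]
    linear_combination (φ (X 2) ^ 3 * φ (X 3) ^ 3 * φ (X 1) ^ 2) * m3x
  have s4 : x 4 * φ hhE ^ 4 = φ (hhP 4) := by
    show _ = φ (hhN4 * X 3 * hhE ^ 3)
    simp only [hhN4, hhN3, hhE, map_mul, map_add, map_pow]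
    linear_combination (φ (X 1) ^ 3 * φ (X 2) ^ 3 * φ (X 3) ^ 4) * m4x
  have s5 : x 5 * φ hhE ^ 5 = φ (hhP 5) := by
    show _ = φ (hhN5 * (X 2 * X 3) * hhE ^ 3)
    simp only [hhN5, hhN4, hhN3, hhE, map_mul, map_add, map_pow]
    linear_combination (φ (X 1) ^ 3 * φ (X 2) ^ 4 * φ (X 3) ^ 4) * m5x
  -- base cases of the invariants
  have lam0 : φ hhk * (x 2 * (x 3 - x 1)) =
      (x 4 * x 3 - x 0 * x 1 + φ (X 0) * (x 3 + x 4 - x 0 - x 1)) * φ hhE := by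
    rw [h0, h1, h2]
    simp only [hhk, hhE, map_mul, map_add, map_pow, map_ofNat]
    linear_combination ((φ (X 3))*(φ (X 0))^2 + (φ (X 3))^2*(φ (X 0)) + (φ (X 2))*(φ (X 3))*(φ (X 0)) + (φ (X 2))*(φ (X 3))^2 + (φ (X 1))*(φ (X 3))*(φ (X 0)) + (φ (X 1))*(φ (X 2))*(φ (X 3))) * m3x + (-(φ (X 3))*(φ (X 0)) - (x 3)*(φ (X 3))) * m4x
  have lam1 : φ hhk * (x 3 * (x 4 - x 2)) =
      (x 5 * x 4 - x 1 * x 2 + φ (X 0) * (x 4 + x 5 - x 1 - x 2)) * φ hhE := by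
    rw [h1, h2]
    apply mul_right_cancel₀ (pow_ne_zero 2 hX1)
    simp only [hhk, hhE, map_mul, map_add, map_pow, map_ofNat]
    linear_combination ((φ (X 3))*(φ (X 0))^4 + (3 : FractionRing (MvPolynomial (Fin 4) ℤ))*(φ (X 3))^2*(φ (X 0))^3 + (3 : FractionRing (MvPolynomial (Fin 4) ℤ))*(φ (X 3))^3*(φ (X 0))^2 + (φ (X 3))^4*(φ (X 0)) + (φ (X 2))*(φ (X 0))^4 + (4 : FractionRing (MvPolynomial (Fin 4) ℤ))*(φ (X 2))*(φ (X 3))*(φ (X 0))^3 + (6 : FractionRing (MvPolynomial (Fin 4) ℤ))*(φ (X 2))*(φ (X 3))^2*(φ (X 0))^2 + (4 : FractionRing (MvPolynomial (Fin 4) ℤ))*(φ (X 2))*(φ (X 3))^3*(φ (X 0)) + (φ (X 2))*(φ (X 3))^4 + (3 : FractionRing (MvPolynomial (Fin 4) ℤ))*(φ (X 1))*(φ (X 3))*(φ (X 0))^3 + (4 : FractionRing (MvPolynomial (Fin 4) ℤ))*(φ (X 1))*(φ (X 3))^2*(φ (X 0))^2 + (φ (X 1))*(φ (X 3))^3*(φ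 (X 0)) + (2 : FractionRing (MvPolynomial (Fin 4) ℤ))*(φ (X 1))*(φ (X 2))*(φ (X 0))^3 + (4 : FractionRing (MvPolynomial (Fin 4) ℤ))*(φ (X 1))*(φ (X 2))*(φ (X 3))*(φ (X 0))^2 + (2 : FractionRing (MvPolynomial (Fin 4) ℤ))*(φ (X 1))*(φ (X 2))*(φ (X 3))^2*(φ (X 0)) + (2 : FractionRing (MvPolynomial (Fin 4) ℤ))*(φ (X 1))^2*(φ (X 3))*(φ (X 0))^2 + (φ (X 1))^2*(φ (X 2))*(φ (X 0))^2 - (φ (X 1))^3*(φ (X 2))*(φ (X 3)) + (x 4)*(φ (X 1))*(φ (X 3))*(φ (X 0))^2 + (x 4)*(φ (X 1))*(φ (X 3))^2*(φ (X 0)) + (x 4)*(φ (X 1))^2*(φ (X 0))^2 + (2 : FractionRing (MvPolynomial (Fin 4) ℤ))*(x 4)*(φ (X 1))^2*(φ (X 3))*(φ (X 0)) + (x 4)*(φ (X 1))^3*(φ (X 0))) * m3x + (-(φ (X 3))*(φ (X 0))^3 + (-2 : FractionRing (MvPolynomial (Fin 4) ℤ))*(φ (X 3))^2*(φ (X 0))^2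 - (φ (X 3))^3*(φ (X 0)) - (φ (X 2))*(φ (X 0))^3 + (-3 : FractionRing (MvPolynomial (Fin 4) ℤ))*(φ (X 2))*(φ (X 3))*(φ (X 0))^2 + (-3 : FractionRing (MvPolynomial (Fin 4) ℤ))*(φ (X 2))*(φ (X 3))^2*(φ (X 0)) - (φ (X 2))*(φ (X 3))^3 - (φ (X 1))*(φ (X 3))*(φ (X 0))^2 - (φ (X 1))*(φ (X 2))*(φ (X 0))^2 - (φ (X 1))*(φ (X 2))*(φ (X 3))*(φ (X 0)) + (φ (X 1))^2*(φ (X 0))^2 + (x 3)*(φ (X 1))*(φ (X 0))^2 + (2 : FractionRing (MvPolynomial (Fin 4) ℤ))*(x 3)*(φ (X 1))*(φ (X 3))*(φ (X 0)) + (x 3)*(φ (X 1))*(φ (X 3))^2 + (2 : FractionRing (MvPolynomial (Fin 4) ℤ))*(x 3)*(φ (X 1))^2*(φ (X 0)) + (x 3)*(φ (X 1))^2*(φ (X 3)) + (x 3)*(φ (X 1))^3) * m4x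
      + (-(φ (X 1))*(φ (X 0)) - (x 4)*(φ (X 1))) * m5x
  have t0 : φ (X 0) * φ hhk * (x 2 + x 3)
        + (x 2 * x 3 + φ (X 0) * (x 2 + x 3 - x 0 - x 5)) * φ hhE = x 0 * x 5 * φ hhE := by
    rw [h0, h2]
    apply mul_right_cancel₀ hX1
    simp only [hhk, hhE, map_mul, map_add, map_pow, map_ofNat]
    linear_combination ((φ (X 3))*(φ (X 0))^3 + (φ (X 3))^2*(φ (X 0))^2 + (φ (X 2))*(φ (X 0))^3 + (2 : FractionRing (MvPolynomial (Fin 4) ℤ))*(φ (X 2))*(φ (X 3))*(φ (X 0))^2 + (φ (X 2))*(φ (X 3))^2*(φ (X 0)) + (φ (X 1))*(φ (X 0))^3 + (2 : FractionRing (MvPolynomial (Fin 4) ℤ))*(φ (X 1))*(φ (X 3))*(φ (X 0))^2 + (2 : FractionRing (MvPolynomial (Fin 4) ℤ))*(φ (X 1))*(φ (X 2))*(φ (X 0))^2 + (2 : FractionRing (MvPolynomial (Fin 4) ℤ))*(φ (X 1))*(φ (X 2))*(φ (X 3))*(φ (X 0)) + (φ (X 1))*(φ (X 2))*(φ (X 3))^2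 + (φ (X 1))^2*(φ (X 0))^2 + (φ (X 1))^2*(φ (X 2))*(φ (X 0))) * m3x + (-(φ (X 0)) - (φ (X 1))) * m5x
  -- the main induction
  have main : ∀ n,
      (x n * φ hhE ^ n = φ (hhP n)) ∧
      (x (n+1) * φ hhE ^ (n+1) = φ (hhP (n+1))) ∧
      (x (n+2) * φ hhE ^ (n+2) = φ (hhP (n+2))) ∧
      (x (n+3) * φ hhE ^ (n+3) = φ (hhP (n+3))) ∧
      (x (n+4) * φ hhE ^ (n+4) = φ (hhP (n+4))) ∧
      (x (n+5) * φ hhE ^ (n+5) = φ (hhP (n+5))) ∧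
      (φ hhk * (x (n+2) * (x (n+3) - x (n+1))) =
        (x (n+4) * x (n+3) - x n * x (n+1)
          + φ (X 0) * (x (n+3) + x (n+4) - x n - x (n+1))) * φ hhE) ∧
      (φ hhk * (x (n+3) * (x (n+4) - x (n+2))) =
        (x (n+5) * x (n+4) - x (n+1) * x (n+2)
          + φ (X 0) * (x (n+4) + x (n+5) - x (n+1) - x (n+2))) * φ hhE) ∧
      (φ (X 0) * φ hhk * (x (n+2) + x (n+3))
        + (x (n+2) * x (n+3) + φ (X 0) * (x (n+2) + x (n+3) - x n - x (n+5))) * φ hhE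
        = x n * x (n+5) * φ hhE) := by
    intro n
    induction n with
    | zero => exact ⟨s0, s1, s2, s3, s4, s5, lam0, lam1, t0⟩
    | succ n ih =>
        obtain ⟨is0, is1, is2, is3, is4, is5, ilam0, ilam1, it0⟩ := ih
        have hx0 : x n ≠ 0 := hnz n is0
        have hx1 : x (n+1) ≠ 0 := hnz (n+1) is1
        have hx2 : x (n+2) ≠ 0 := hnz (n+2) is2
        have hx3 : x (n+3) ≠ 0 := hnz (n+3) is3
        have hN0 : x (n+3) * x n = x (n+2) * x (n+1) + φ (X 0) * (x (n+1) + x (n+2)) := by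
          rw [hrec n, div_mul_cancel₀ _ hx0]
        have hN1 : x (n+4) * x (n+1) = x (n+3) * x (n+2) + φ (X 0) * (x (n+2) + x (n+3)) := by
          have h := hrec (n+1)
          norm_num at h
          rw [h, div_mul_cancel₀ _ hx1]
        have hN2 : x (n+5) * x (n+2) = x (n+4) * x (n+3) + φ (X 0) * (x (n+3) + x (n+4)) := by
          have h := hrec (n+2)
          norm_num at h
          rw [h, div_mul_cancel₀ _ hx2]
        have hN3 : x (n+6) * x (n+3) = x (n+5) * x (n+4) + φ (X 0) * (x (n+4) + x (n+5)) := by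
          have h := hrec (n+3)
          norm_num at h
          rw [h, div_mul_cancel₀ _ hx3]
        have hL : x (n+6) * φ hhE = φ hhk * (x (n+4) - x (n+2)) + x n * φ hhE := by
          apply mul_left_cancel₀ hx3
          linear_combination -ilam1 - φ hhE * hN0 + φ hhE * hN3
        have s6 : x (n+6) * φ hhE ^ (n+6) = φ (hhP (n+6)) := by
          show _ = φ (hhk * (hhP (n + 4) * hhE - hhP (n + 2) * hhE ^ 3) + hhP n * hhE ^ 6)
          simp only [map_add, map_mul, map_sub, map_pow]
          linear_combination φ hhE ^ (n+5) * hL + φ hhk * φ hhE * is4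
            - φ hhk * φ hhE ^ 3 * is2 + φ hhE ^ 6 * is0
        have lam2 : φ hhk * (x (n+4) * (x (n+5) - x (n+3))) =
            (x (n+6) * x (n+5) - x (n+2) * x (n+3)
              + φ (X 0) * (x (n+5) + x (n+6) - x (n+2) - x (n+3))) * φ hhE := by
          linear_combination φ hhk * hN2 + it0 - (x (n+5) + φ (X 0)) * hL
        have t1 : φ (X 0) * φ hhk * (x (n+3) + x (n+4))
            + (x (n+3) * x (n+4) + φ (X 0) * (x (n+3) + x (n+4) - x (n+1) - x (n+6))) * φ hhE
            = x (n+1) * x (n+6) * φ hhE := by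
          linear_combination -ilam0 - φ hhk * hN1 - (φ (X 0) + x (n+1)) * hL
        exact ⟨is1, is2, is3, is4, is5, s6, ilam1, lam2, t1⟩
  intro n
  obtain ⟨sn, -⟩ := main n
  refine ⟨hhP n, n, n, n, ?_⟩
  have hE : (X 1 ^ n * X 2 ^ n * X 3 ^ n : MvPolynomial (Fin 4) ℤ) = hhE ^ n := by
    rw [hhE, mul_pow, mul_pow]
  rw [hE, map_pow]
  exact sn
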